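/- For every n ∈ ℤ, the extremal length with totally real boundary values of a₁ⁿ and of a₂ⁿ is zero: λ_tr(a₁ⁿ) = 0 and λ_tr(a₂ⁿ) = 0. -/

import Mathlib

open Complex unitInterval

attribute [local instance] Path.Homotopic.setoid

/-- The twice punctured plane `ℂ \ {−1, 1}`. -/
abbrev TwicePunctured : Type := ({-1, 1}ᶜ : Set ℂ)

/-- The base point `0` of `ℂ \ {−1, 1}`. -/
def puncturedBase : TwicePunctured := ⟨0, by norm_num⟩

/-- A loop in `ℂ \ {−1,1}` based at `0` as an element of the fundamental group. -/
noncomputable def fromLoopT (γ : Path puncturedBase puncturedBase) :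
    FundamentalGroup TwicePunctured puncturedBase :=
  FundamentalGroup.fromPath (X := TopCat.of TwicePunctured) ⟦γ⟧

/-- The loop `α₁(t) = −1 + e^{2πit}` surrounding `−1` counterclockwise. -/
noncomputable def loopOne : Path puncturedBase puncturedBase where
  toFun t :=
    ⟨-1 + Complex.exp (((2 * Real.pi * (t : ℝ) : ℝ) : ℂ) * Complex.I), by
      have habs := Complex.norm_exp_ofReal_mul_I (2 * Real.pi * (t : ℝ))
      have hne := Complex.exp_ne_zero (((2 * Real.pi * (t : ℝ) : ℝ) : ℂ) * Complex.I)
      simp only [Set.mem_compl_iff, Set.mem_insert_iff, Set.mem_singleton_iff]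
      push_neg
      constructor
      · intro h; exact hne (by linear_combination h)
      · intro h
        have h2 : Complex.exp (((2 * Real.pi * (t : ℝ) : ℝ) : ℂ) * Complex.I) = 2 := by
          linear_combination h
        rw [h2] at habs
        simp at habs⟩
  continuous_toFun := by fun_prop
  source' := by
    ext : 1
    simp [puncturedBase]
  target' := by
    ext : 1
    simp [puncturedBase, Complex.exp_two_pi_mul_I]

/-- The loop `α₂(t) = 1 − e^{2πit}` surrounding `1` counterclockwise. -/
noncomputable def loopTwo : Path puncturedBase puncturedBase where
  toFun t :=
    ⟨1 - Complex.exp (((2 * Real.pi * (t : ℝ) : ℝ) : ℂ) * Complex.I), by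
      have habs := Complex.norm_exp_ofReal_mul_I (2 * Real.pi * (t : ℝ))
      have hne := Complex.exp_ne_zero (((2 * Real.pi * (t : ℝ) : ℝ) : ℂ) * Complex.I)
      simp only [Set.mem_compl_iff, Set.mem_insert_iff, Set.mem_singleton_iff]
      push_neg
      constructor
      · intro h
        have h2 : Complex.exp (((2 * Real.pi * (t : ℝ) : ℝ) : ℂ) * Complex.I) = 2 := by
          linear_combination -h
        rw [h2] at habs
        simp at habs
      · intro h; exact hne (by linear_combination -h)⟩
  continuous_toFun := by fun_prop
  source' := by
    ext : 1
    simp [puncturedBase]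
  target' := by
    ext : 1
    simp [puncturedBase, Complex.exp_two_pi_mul_I]

/-- The generator `a₁` of `π₁(ℂ \ {−1,1}, 0)`. -/
noncomputable def genOne : FundamentalGroup TwicePunctured puncturedBase := fromLoopT loopOne

/-- The generator `a₂` of `π₁(ℂ \ {−1,1}, 0)`. -/
noncomputable def genTwo : FundamentalGroup TwicePunctured puncturedBase := fromLoopT loopTwo

/-- `gen false = a₁`, `gen true = a₂`. -/
noncomputable def gen (b : Bool) : FundamentalGroup TwicePunctured puncturedBase :=
  if b then genTwo else genOne

/-- A word `a_{i₁}^{n₁} ⋯ a_{i_m}^{n_m}` is encoded as a list of pairs (generator, exponent);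
it is reduced when all exponents are nonzero and consecutive generators differ. -/
def ReducedWord (l : List (Bool × ℤ)) : Prop :=
  (∀ p ∈ l, p.2 ≠ 0) ∧ l.Chain' (fun p q => p.1 ≠ q.1)

/-- The element of `π₁(ℂ \ {−1,1}, 0)` represented by a word. -/
noncomputable def wordProd (l : List (Bool × ℤ)) :
    FundamentalGroup TwicePunctured puncturedBase :=
  (l.map fun p => gen p.1 ^ p.2).prod

/-- The syllable decomposition of a reduced word: consecutive terms are grouped together
exactly when they carry the same exponent equal to `+1` or `−1`; each term with exponent of
absolute value at least `2` is its own syllable, and remaining terms are singletons. -/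
def syllables : List (Bool × ℤ) → List (List (Bool × ℤ))
  | [] => []
  | p :: rest =>
    match syllables rest with
    | (q :: s) :: ss =>
      if p.2 = q.2 ∧ (p.2 = 1 ∨ p.2 = -1) then (p :: q :: s) :: ss
      else [p] :: (q :: s) :: ss
    | ss => [p] :: ss

/-- The degree of a syllable: the sum of the absolute values of the exponents of its terms. -/
def syllableDegree (s : List (Bool × ℤ)) : ℤ := (s.map fun p => |p.2|).sum

/-- `Λ(w) = Σ_{syllables of w} log(1 + deg(syllable))`. -/
noncomputable def LambdaWord (l : List (Bool × ℤ)) : ℝ :=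
  ((syllables l).map fun s => Real.log (1 + (syllableDegree s : ℝ))).sum

/-- The totally real boundary set: the interval `(−1,1)` of the real axis. -/
def trSet : Set ℂ := {z : ℂ | z.im = 0 ∧ -1 < z.re ∧ z.re < 1}

/-- The perpendicular bisector boundary set: the imaginary axis `iℝ`. -/
def pbSet : Set ℂ := {z : ℂ | z.re = 0}

/-- The open axis-parallel rectangle `{z : x₁ < Re z < x₂, y₁ < Im z < y₂}`. -/
def openRect (x₁ x₂ y₁ y₂ : ℝ) : Set ℂ :=
  {z : ℂ | x₁ < z.re ∧ z.re < x₂ ∧ y₁ < z.im ∧ z.im < y₂}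

/-- A side function `g : I → ℂ` (with values in `ℂ \ {−1,1}` and endpoints in `B`)
represents `w` if it is homotopic, through curves in `ℂ \ {−1,1}` whose endpoints stay
in `B`, to a loop based at `0` whose class is `w`. -/
def SideRepresents (B : Set ℂ) (w : FundamentalGroup TwicePunctured puncturedBase)
    (g : I → ℂ) : Prop :=
  ∃ γ : Path puncturedBase puncturedBase, fromLoopT γ = w ∧
    ∃ H : I × I → ℂ, Continuous H ∧
      (∀ p : I × I, H p ∈ ({-1, 1}ᶜ : Set ℂ)) ∧
      (∀ t : I, H (0, t) = g t) ∧ (∀ t : I, H (1, t) = (γ t : ℂ)) ∧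
      (∀ s : I, H (s, 0) ∈ B) ∧ (∀ s : I, H (s, 1) ∈ B)

/-- A map, continuous on the closed rectangle, holomorphic inside, with values in
`ℂ \ {−1,1}`, represents `w` with boundary values in `B` if it maps the horizontal sides
into `B` and each vertical side, as a curve with endpoints in `B`, represents `w`. -/
def RepresentsOnRect (B : Set ℂ) (w : FundamentalGroup TwicePunctured puncturedBase)
    (x₁ x₂ y₁ y₂ : ℝ) : Prop :=
  ∃ f : ℂ → ℂ,
    ContinuousOn f (closure (openRect x₁ x₂ y₁ y₂)) ∧
    DifferentiableOn ℂ f (openRect x₁ x₂ y₁ y₂) ∧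
    (∀ z ∈ closure (openRect x₁ x₂ y₁ y₂), f z ∈ ({-1, 1}ᶜ : Set ℂ)) ∧
    (∀ x ∈ Set.Icc x₁ x₂,
      f ((x : ℂ) + (y₁ : ℂ) * Complex.I) ∈ B ∧ f ((x : ℂ) + (y₂ : ℂ) * Complex.I) ∈ B) ∧
    SideRepresents B w (fun t => f ((x₁ : ℂ) + ((y₁ + (t : ℝ) * (y₂ - y₁) : ℝ) : ℂ) * Complex.I)) ∧
    SideRepresents B w (fun t => f ((x₂ : ℂ) + ((y₁ + (t : ℝ) * (y₂ - y₁) : ℝ) : ℂ) * Complex.I))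

/-- The extremal length of `w` with boundary values in `B`: the infimum of the extremal
lengths `(y₂−y₁)/(x₂−x₁)` of rectangles admitting a representing map. -/
noncomputable def extremalLength (B : Set ℂ)
    (w : FundamentalGroup TwicePunctured puncturedBase) : ℝ :=
  sInf {l : ℝ | ∃ x₁ x₂ y₁ y₂ : ℝ, x₁ < x₂ ∧ y₁ < y₂ ∧
    l = (y₂ - y₁) / (x₂ - x₁) ∧ RepresentsOnRect B w x₁ x₂ y₁ y₂}

/-- `λ_tr`, the extremal length with totally real boundary values. -/
noncomputable def lambdaTR (w : FundamentalGroup TwicePunctured puncturedBase) : ℝ :=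
  extremalLength trSet w

/-- `λ_pb`, the extremal length with perpendicular bisector boundary values. -/
noncomputable def lambdaPB (w : FundamentalGroup TwicePunctured puncturedBase) : ℝ :=
  extremalLength pbSet w

theorem fromLoopT_eq_of_homotopic {γ δ : Path puncturedBase puncturedBase}
    (h : γ.Homotopic δ) : fromLoopT γ = fromLoopT δ := by
  unfold fromLoopT
  rw [Quotient.sound h]

theorem fromLoopT_refl : fromLoopT (Path.refl puncturedBase) = 1 := by
  rfl

theorem fromLoopT_mul (γ δ : Path puncturedBase puncturedBase) :
    fromLoopT γ * fromLoopT δ = fromLoopT (δ.trans γ) := by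
  rfl


theorem mem_twice (c : ℂ) (hc : c = 1 ∨ c = -1) (r φ : ℝ) (hr0 : 0 < r) (hr2 : r < 2) :
    c - c * ((r : ℂ) * Complex.exp ((φ : ℂ) * Complex.I)) ∈ ({-1, 1}ᶜ : Set ℂ) := by
  have habs : ‖(r : ℂ) * Complex.exp ((φ : ℂ) * Complex.I)‖ = r := by
    rw [norm_mul, Complex.norm_exp_ofReal_mul_I, Complex.norm_real, Real.norm_eq_abs, abs_of_pos hr0, mul_one]
  simp only [Set.mem_compl_iff, Set.mem_insert_iff, Set.mem_singleton_iff]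
  push_neg
  rcases hc with rfl | rfl
  · constructor
    · intro h
      have h2 : (r : ℂ) * Complex.exp ((φ : ℂ) * Complex.I) = 2 := by linear_combination -h
      rw [h2] at habs; norm_num at habs; linarith
    · intro h
      have h2 : (r : ℂ) * Complex.exp ((φ : ℂ) * Complex.I) = 0 := by linear_combination -h
      rw [h2] at habs; norm_num at habs; linarith
  · constructor
    · intro h
      have h2 : (r : ℂ) * Complex.exp ((φ : ℂ) * Complex.I) = 0 := by linear_combination h
      rw [h2] at habs; norm_num at habs; linarith
    · intro h
      have h2 : (r : ℂ) * Complex.exp ((φ : ℂ) * Complex.I) = 2 := by linear_combination h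
      rw [h2] at habs; norm_num at habs; linarith

/-- circle path of winding function θ around center c∓, value c - c·e^{2πiθ(t)}. -/
noncomputable def cpath (c : ℂ) (hc : c = 1 ∨ c = -1) (θ : ℝ → ℝ) (hθ : Continuous θ)
    (h0 : θ 0 = 0) (m : ℤ) (h1 : θ 1 = m) : Path puncturedBase puncturedBase where
  toFun t :=
    ⟨c - c * (((1 : ℝ) : ℂ) * Complex.exp (((2 * Real.pi * θ (t : ℝ) : ℝ) : ℂ) * Complex.I)),
      mem_twice c hc 1 _ one_pos one_lt_two⟩
  continuous_toFun := by fun_prop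
  source' := by
    ext : 1
    simp [puncturedBase, h0]
  target' := by
    ext : 1
    show c - c * (((1 : ℝ) : ℂ) *
        Complex.exp (((2 * Real.pi * θ (((1 : I) : ℝ)) : ℝ) : ℂ) * Complex.I)) = (puncturedBase : ℂ)
    have e : ((2 * Real.pi * θ (((1 : I) : ℝ)) : ℝ) : ℂ) * Complex.I
        = m * (2 * Real.pi * Complex.I) := by
      rw [Set.Icc.coe_one, h1]; push_cast; ring
    rw [e, Complex.exp_int_mul_two_pi_mul_I]
    simp [puncturedBase]

theorem cpath_homotopic (c : ℂ) (hc : c = 1 ∨ c = -1) (θ₁ θ₂ : ℝ → ℝ)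
    (hθ₁ : Continuous θ₁) (hθ₂ : Continuous θ₂) (h01 : θ₁ 0 = 0) (h02 : θ₂ 0 = 0)
    (m : ℤ) (h11 : θ₁ 1 = m) (h12 : θ₂ 1 = m) :
    fromLoopT (cpath c hc θ₁ hθ₁ h01 m h11) = fromLoopT (cpath c hc θ₂ hθ₂ h02 m h12) := by
  apply fromLoopT_eq_of_homotopic
  refine ⟨⟨⟨⟨fun p => ⟨c - c * (((1 : ℝ) : ℂ) * Complex.exp
      (((2 * Real.pi * ((1 - (p.1 : ℝ)) * θ₁ (p.2 : ℝ) + (p.1 : ℝ) * θ₂ (p.2 : ℝ)) : ℝ) : ℂ)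
        * Complex.I)), mem_twice c hc 1 _ one_pos one_lt_two⟩, ?_⟩, ?_, ?_⟩, ?_⟩⟩
  · fun_prop
  · intro x
    ext : 1
    show c - c * _ = c - c * _
    norm_num [cpath]
  · intro x
    ext : 1
    show c - c * _ = c - c * _
    norm_num [cpath]
  · intro t x hx
    ext : 1
    show c - c * _ = c - c * _
    rcases hx with rfl | rfl
    · norm_num [cpath, Set.Icc.coe_zero, h01, h02]
    · norm_num [cpath, Set.Icc.coe_one, h11, h12]
      left
      congr 1
      push_cast
      ring

theorem exp_int_shift (k : ℤ) (a : ℝ) :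
    Complex.exp (((2 * Real.pi * (k + a) : ℝ) : ℂ) * Complex.I)
      = Complex.exp (((2 * Real.pi * a : ℝ) : ℂ) * Complex.I) := by
  rw [show ((2 * Real.pi * (k + a) : ℝ) : ℂ) * Complex.I
      = k * (2 * Real.pi * Complex.I) + ((2 * Real.pi * a : ℝ) : ℂ) * Complex.I by
    push_cast; ring]
  rw [Complex.exp_add, Complex.exp_int_mul_two_pi_mul_I, one_mul]

/-- concatenated winding function -/
noncomputable def transW (θ₁ θ₂ : ℝ → ℝ) (m₁ : ℤ) : ℝ → ℝ := fun t =>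
  if t ≤ 1 / 2 then θ₁ (2 * t) else (m₁ : ℝ) + θ₂ (2 * t - 1)

theorem transW_continuous (θ₁ θ₂ : ℝ → ℝ) (hθ₁ : Continuous θ₁) (hθ₂ : Continuous θ₂)
    (m₁ : ℤ) (h11 : θ₁ 1 = m₁) (h02 : θ₂ 0 = 0) : Continuous (transW θ₁ θ₂ m₁) := by
  apply Continuous.if_le (by fun_prop) (by fun_prop) continuous_id continuous_const
  intro x hx
  subst hx
  norm_num [h11, h02]

theorem transW_zero (θ₁ θ₂ : ℝ → ℝ) (m₁ : ℤ) (h01 : θ₁ 0 = 0) : transW θ₁ θ₂ m₁ 0 = 0 := by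
  norm_num [transW, h01]

theorem transW_one (θ₁ θ₂ : ℝ → ℝ) (m₁ m₂ : ℤ) (h12 : θ₂ 1 = m₂) :
    transW θ₁ θ₂ m₁ 1 = ((m₁ + m₂ : ℤ) : ℝ) := by
  norm_num [transW, h12]

theorem fromLoopT_cpath_mul (c : ℂ) (hc : c = 1 ∨ c = -1) (θ₁ θ₂ : ℝ → ℝ)
    (hθ₁ : Continuous θ₁) (hθ₂ : Continuous θ₂) (h01 : θ₁ 0 = 0) (h02 : θ₂ 0 = 0)
    (m₁ m₂ : ℤ) (h11 : θ₁ 1 = m₁) (h12 : θ₂ 1 = m₂) :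
    fromLoopT (cpath c hc θ₂ hθ₂ h02 m₂ h12) * fromLoopT (cpath c hc θ₁ hθ₁ h01 m₁ h11)
      = fromLoopT (cpath c hc (transW θ₁ θ₂ m₁)
          (transW_continuous θ₁ θ₂ hθ₁ hθ₂ m₁ h11 h02)
          (transW_zero θ₁ θ₂ m₁ h01) (m₁ + m₂) (transW_one θ₁ θ₂ m₁ m₂ h12)) := by
  rw [fromLoopT_mul]
  congr 1
  ext t
  rw [Path.trans_apply]
  split_ifs with h
  · simp only [cpath, transW]
    norm_num
    left
    rw [if_pos h]
    norm_cast
    rw [Complex.ofReal_mul, Complex.ofReal_mul, Complex.ofReal_ofNat]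
  · simp only [cpath, transW]
    norm_num
    left
    rw [if_neg h, show 2 * Real.pi * ((m₁ : ℝ) + θ₂ (2 * (t : ℝ) - 1))
      = 2 * Real.pi * ((m₁ : ℝ) + θ₂ (2 * (t : ℝ) - 1)) from rfl, exp_int_shift]
    norm_cast
    rw [Complex.ofReal_mul, Complex.ofReal_mul, Complex.ofReal_ofNat]

/-- linear winding -/
noncomputable def linW (n : ℤ) : ℝ → ℝ := fun t => (n : ℝ) * t

theorem linW_cont (n : ℤ) : Continuous (linW n) := by unfold linW; fun_prop
theorem linW_zero (n : ℤ) : linW n 0 = 0 := mul_zero _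
theorem linW_one (n : ℤ) : linW n 1 = (n : ℝ) := mul_one _

/-- the basic counterclockwise loop around the puncture -/
noncomputable def genC (c : ℂ) (hc : c = 1 ∨ c = -1) :
    FundamentalGroup TwicePunctured puncturedBase :=
  fromLoopT (cpath c hc (linW 1) (linW_cont 1) (linW_zero 1) 1 (linW_one 1))

theorem fromLoopT_cpath_zero (c : ℂ) (hc : c = 1 ∨ c = -1) (θ : ℝ → ℝ) (hθ : Continuous θ)
    (h0 : θ 0 = 0) (m : ℤ) (h1 : θ 1 = m) (hzero : ∀ t, θ t = 0) :
    fromLoopT (cpath c hc θ hθ h0 m h1) = 1 := by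
  have : cpath c hc θ hθ h0 m h1 = Path.refl puncturedBase := by
    ext t
    simp [cpath, hzero, Path.refl, puncturedBase]
    rfl
  rw [this, fromLoopT_refl]

theorem cpath_eq_pow (c : ℂ) (hc : c = 1 ∨ c = -1) (m : ℤ) (θ : ℝ → ℝ) (hθ : Continuous θ)
    (h0 : θ 0 = 0) (h1 : θ 1 = m) :
    fromLoopT (cpath c hc θ hθ h0 m h1) = genC c hc ^ m := by
  have hinv : fromLoopT (cpath c hc (linW (-1)) (linW_cont (-1)) (linW_zero (-1)) (-1)
      (linW_one (-1))) = (genC c hc)⁻¹ := by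
    apply eq_inv_of_mul_eq_one_right
    show genC c hc * _ = 1
    rw [genC, fromLoopT_cpath_mul c hc (linW (-1)) (linW 1) (linW_cont (-1)) (linW_cont 1)
      (linW_zero (-1)) (linW_zero 1) (-1) 1 (linW_one (-1)) (linW_one 1)]
    rw [cpath_homotopic c hc _ (linW 0)
      (transW_continuous _ _ (linW_cont (-1)) (linW_cont 1) (-1) (linW_one (-1)) (linW_zero 1))
      (linW_cont 0)
      (transW_zero _ _ _ (linW_zero (-1))) (linW_zero 0) (-1 + 1)
      (transW_one _ _ (-1) 1 (linW_one 1)) (by norm_num [linW])]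
    exact fromLoopT_cpath_zero c hc (linW 0) _ _ _ _ (by simp [linW])
  induction m using Int.induction_on generalizing θ hθ h0 with
  | zero =>
    rw [cpath_homotopic c hc θ (linW 0) hθ (linW_cont 0) h0 (linW_zero 0) 0 h1
      (by norm_num [linW])]
    rw [zpow_zero]
    exact fromLoopT_cpath_zero c hc (linW 0) _ _ 0 _ (by simp [linW])
  | succ i ih =>
    rw [cpath_homotopic c hc θ (transW (linW i) (linW 1) i) hθ
      (transW_continuous _ _ (linW_cont i) (linW_cont 1) i (linW_one i) (linW_zero 1))
      h0 (transW_zero _ _ _ (linW_zero i)) (i + 1) h1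
      (by rw [transW_one _ _ _ _ (linW_one 1)])]
    rw [show (cpath c hc (transW (linW i) (linW 1) i) _ _ (i+1) _)
        = cpath c hc (transW (linW i) (linW 1) i)
          (transW_continuous _ _ (linW_cont i) (linW_cont 1) i (linW_one i) (linW_zero 1))
          (transW_zero _ _ _ (linW_zero i)) (i + 1) (transW_one _ _ i 1 (linW_one 1)) from rfl]
    rw [← fromLoopT_cpath_mul c hc (linW i) (linW 1) (linW_cont i) (linW_cont 1)
      (linW_zero i) (linW_zero 1) i 1 (linW_one i) (linW_one 1)]
    rw [ih (linW i) (linW_cont i) (linW_zero i) (linW_one i)]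
    show genC c hc * genC c hc ^ (i : ℤ) = genC c hc ^ ((i : ℤ) + 1)
    rw [zpow_add_one, ← ((Commute.refl (genC c hc)).zpow_right (i : ℤ)).eq]
  | pred i ih =>
    rw [cpath_homotopic c hc θ (transW (linW (-i)) (linW (-1)) (-i)) hθ
      (transW_continuous _ _ (linW_cont (-i)) (linW_cont (-1)) (-i) (linW_one (-i))
        (linW_zero (-1)))
      h0 (transW_zero _ _ _ (linW_zero (-i))) (-i - 1) h1
      (by rw [transW_one _ _ (-i) (-1) (linW_one (-1))]; push_cast; ring)]
    rw [show (cpath c hc (transW (linW (-i)) (linW (-1)) (-i)) _ _ (-i-1) _)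
        = cpath c hc (transW (linW (-i)) (linW (-1)) (-i))
          (transW_continuous _ _ (linW_cont (-i)) (linW_cont (-1)) (-i) (linW_one (-i))
            (linW_zero (-1)))
          (transW_zero _ _ _ (linW_zero (-i))) (-i + -1)
          (transW_one _ _ (-i) (-1) (linW_one (-1))) from rfl]
    rw [← fromLoopT_cpath_mul c hc (linW (-i)) (linW (-1)) (linW_cont (-i)) (linW_cont (-1))
      (linW_zero (-i)) (linW_zero (-1)) (-i) (-1) (linW_one (-i)) (linW_one (-1))]
    rw [ih (linW (-i)) (linW_cont (-i)) (linW_zero (-i)) (linW_one (-i)), hinv]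
    show (genC c hc)⁻¹ * genC c hc ^ (-(i:ℤ)) = genC c hc ^ (-(i:ℤ) + -1)
    rw [zpow_add, zpow_neg_one]
    exact ((Commute.refl (genC c hc)).inv_left.zpow_right (-(i:ℤ))).eq

theorem genOne_eq : genOne = genC (-1) (Or.inr rfl) := by
  unfold genOne genC fromLoopT
  congr 1
  apply Quotient.sound
  apply Quotient.exact
  congr 1
  ext t
  simp [loopOne, cpath, linW]

theorem genTwo_eq : genTwo = genC 1 (Or.inl rfl) := by
  unfold genTwo genC fromLoopT
  congr 1
  apply Quotient.sound
  apply Quotient.exact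
  congr 1
  ext t
  simp [loopTwo, cpath, linW]

theorem exp_split (n : ℤ) (z : ℂ) :
    Complex.exp (2 * Real.pi * (n : ℂ) * z)
      = ((Real.exp (2 * Real.pi * n * z.re) : ℝ) : ℂ)
        * Complex.exp (((2 * Real.pi * ((n : ℝ) * z.im) : ℝ) : ℂ) * Complex.I) := by
  rw [Complex.ofReal_exp, ← Complex.exp_add]
  congr 1
  rw [show (2 : ℂ) * Real.pi * (n : ℂ) * z
      = 2 * Real.pi * (n : ℂ) * (z.re + z.im * Complex.I) by rw [Complex.re_add_im]]
  push_cast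
  ring

theorem real_mem_trSet (c : ℂ) (hc : c = 1 ∨ c = -1) (r : ℝ) (h0 : 0 < r) (h2 : r < 2) :
    c - c * ((r : ℝ) : ℂ) ∈ trSet := by
  rcases hc with rfl | rfl
  · refine ⟨by simp, ?_, ?_⟩ <;> simp <;> linarith
  · refine ⟨by simp, ?_, ?_⟩ <;> simp <;> linarith

theorem side_rep (c : ℂ) (hc : c = 1 ∨ c = -1) (n : ℤ) (ε xx : ℝ)
    (hR0 : 0 < ε * Real.exp (2 * Real.pi * n * xx))
    (hR2 : ε * Real.exp (2 * Real.pi * n * xx) < 2) :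
    SideRepresents trSet
      (fromLoopT (cpath c hc (linW n) (linW_cont n) (linW_zero n) n (linW_one n)))
      (fun t => c - c * ((ε : ℂ) * Complex.exp (2 * Real.pi * (n : ℂ)
          * ((xx : ℂ) + ((0 + (t : ℝ) * (1 - 0) : ℝ) : ℂ) * Complex.I)))) := by
  refine ⟨cpath c hc (linW n) (linW_cont n) (linW_zero n) n (linW_one n), rfl,
    fun p => c - c * ((((1 - (p.1 : ℝ)) * (ε * Real.exp (2 * Real.pi * n * xx)) + (p.1 : ℝ) : ℝ) : ℂ)
      * Complex.exp (((2 * Real.pi * ((n : ℝ) * (p.2 : ℝ)) : ℝ) : ℂ) * Complex.I)),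
    by fun_prop, ?_, ?_, ?_, ?_, ?_⟩
  · rintro ⟨s, t⟩
    exact mem_twice c hc _ _
      (by nlinarith [s.2.1, s.2.2, unitInterval.nonneg s, unitInterval.le_one s])
      (by nlinarith [s.2.1, s.2.2])
  · intro t
    dsimp only
    have hz : ((xx : ℂ) + ((0 + (t : ℝ) * (1 - 0) : ℝ) : ℂ) * Complex.I).re = xx ∧
        ((xx : ℂ) + ((0 + (t : ℝ) * (1 - 0) : ℝ) : ℂ) * Complex.I).im
          = (0 + (t : ℝ) * (1 - 0) : ℝ) := by constructor <;> simp
    rw [exp_split n _, hz.1, hz.2]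
    push_cast [Complex.ofReal_exp]
    ring
  · intro t
    dsimp only
    simp only [cpath, linW, Path.coe_mk_mk]
    push_cast
    ring_nf
  · intro s
    dsimp only
    have h1 : ((2 * Real.pi * ((n : ℝ) * ((0 : I) : ℝ)) : ℝ) : ℂ) * Complex.I = 0 := by
      norm_num
    rw [h1, Complex.exp_zero, mul_one]
    exact real_mem_trSet c hc _
      (by nlinarith [s.2.1, s.2.2]) (by nlinarith [s.2.1, s.2.2])
  · intro s
    dsimp only
    have h1 : ((2 * Real.pi * ((n : ℝ) * ((1 : I) : ℝ)) : ℝ) : ℂ) * Complex.I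
        = n * (2 * Real.pi * Complex.I) := by
      norm_num
      push_cast
      ring
    rw [h1, Complex.exp_int_mul_two_pi_mul_I, mul_one]
    exact real_mem_trSet c hc _
      (by nlinarith [s.2.1, s.2.2]) (by nlinarith [s.2.1, s.2.2])

theorem rep_rect (c : ℂ) (hc : c = 1 ∨ c = -1) (n : ℤ) (b : ℝ) (hb : 0 < b) :
    RepresentsOnRect trSet
      (fromLoopT (cpath c hc (linW n) (linW_cont n) (linW_zero n) n (linW_one n)))
      0 b 0 1 := by
  set ε : ℝ := Real.exp (-(2 * Real.pi * |(n : ℝ)| * b)) with hε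
  have hεpos : 0 < ε := Real.exp_pos _
  have hkey : ∀ x : ℝ, 0 ≤ x → x ≤ b → 0 < ε * Real.exp (2 * Real.pi * n * x)
      ∧ ε * Real.exp (2 * Real.pi * n * x) ≤ 1 := by
    intro x h0 h1
    constructor
    · positivity
    · rw [hε, ← Real.exp_add]
      rw [show -(2 * Real.pi * |(n : ℝ)| * b) + 2 * Real.pi * n * x
          = 2 * Real.pi * ((n : ℝ) * x - |(n : ℝ)| * b) by ring]
      have hle : (n : ℝ) * x ≤ |(n : ℝ)| * b := by
        calc (n : ℝ) * x ≤ |(n : ℝ) * x| := le_abs_self _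
        _ = |(n : ℝ)| * |x| := abs_mul _ _
        _ = |(n : ℝ)| * x := by rw [_root_.abs_of_nonneg h0]
        _ ≤ |(n : ℝ)| * b := by
            have := abs_nonneg (n : ℝ); nlinarith
      have : 2 * Real.pi * ((n : ℝ) * x - |(n : ℝ)| * b) ≤ 0 := by
        have hπ := Real.pi_pos; nlinarith
      calc Real.exp _ ≤ Real.exp 0 := Real.exp_le_exp.2 this
      _ = 1 := Real.exp_zero
  have hre : ∀ z ∈ closure (openRect 0 b 0 1), z.re ∈ Set.Icc (0:ℝ) b := by
    have hs : openRect 0 b 0 1 ⊆ Complex.re ⁻¹' Set.Icc (0:ℝ) b := by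
      rintro z ⟨h1, h2, _, _⟩; exact ⟨le_of_lt h1, le_of_lt h2⟩
    intro z hz
    exact closure_minimal hs (isClosed_Icc.preimage Complex.continuous_re) hz
  have hsplit : ∀ z : ℂ, (ε : ℂ) * Complex.exp (2 * Real.pi * (n : ℂ) * z)
      = (((ε * Real.exp (2 * Real.pi * n * z.re) : ℝ)) : ℂ)
        * Complex.exp (((2 * Real.pi * ((n : ℝ) * z.im) : ℝ) : ℂ) * Complex.I) := by
    intro z
    rw [exp_split n z]
    push_cast [Complex.ofReal_exp]
    ring
  refine ⟨fun z => c - c * ((ε : ℂ) * Complex.exp (2 * Real.pi * (n : ℂ) * z)),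
    Continuous.continuousOn (by fun_prop), ?_, ?_, ?_, ?_, ?_⟩
  · apply Differentiable.differentiableOn
    fun_prop
  · intro z hz
    dsimp only
    rw [hsplit z]
    obtain ⟨hz1, hz2⟩ := hre z hz
    exact mem_twice c hc _ _ (hkey z.re hz1 hz2).1 (lt_of_le_of_lt (hkey z.re hz1 hz2).2 one_lt_two)
  · rintro x ⟨hx1, hx2⟩
    constructor
    · dsimp only
      rw [hsplit]
      have h1 : ((x : ℂ) + ((0:ℝ) : ℂ) * Complex.I).re = x := by simp
      have h2 : ((x : ℂ) + ((0:ℝ) : ℂ) * Complex.I).im = 0 := by simp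
      rw [h1, h2]
      rw [show ((2 * Real.pi * ((n : ℝ) * (0:ℝ)) : ℝ) : ℂ) * Complex.I = 0 by norm_num]
      rw [Complex.exp_zero, mul_one]
      exact real_mem_trSet c hc _ (hkey x hx1 hx2).1
        (lt_of_le_of_lt (hkey x hx1 hx2).2 one_lt_two)
    · dsimp only
      rw [hsplit]
      have h1 : ((x : ℂ) + ((1:ℝ) : ℂ) * Complex.I).re = x := by simp
      have h2 : ((x : ℂ) + ((1:ℝ) : ℂ) * Complex.I).im = 1 := by simp
      rw [h1, h2]
      rw [show ((2 * Real.pi * ((n : ℝ) * (1:ℝ)) : ℝ) : ℂ) * Complex.I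
          = n * (2 * Real.pi * Complex.I) by push_cast; ring]
      rw [Complex.exp_int_mul_two_pi_mul_I, mul_one]
      exact real_mem_trSet c hc _ (hkey x hx1 hx2).1
        (lt_of_le_of_lt (hkey x hx1 hx2).2 one_lt_two)
  · have h := side_rep c hc n ε 0 (hkey 0 le_rfl (le_of_lt hb)).1
      (lt_of_le_of_lt (hkey 0 le_rfl (le_of_lt hb)).2 one_lt_two)
    convert h using 2 with t
  · have h := side_rep c hc n ε b (hkey b (le_of_lt hb) le_rfl).1
      (lt_of_le_of_lt (hkey b (le_of_lt hb) le_rfl).2 one_lt_two)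
    convert h using 2 with t

theorem lambdaTR_cpath_zero (c : ℂ) (hc : c = 1 ∨ c = -1) (n : ℤ) :
    lambdaTR (fromLoopT (cpath c hc (linW n) (linW_cont n) (linW_zero n) n (linW_one n))) = 0 := by
  set w := fromLoopT (cpath c hc (linW n) (linW_cont n) (linW_zero n) n (linW_one n)) with hw
  set S : Set ℝ := {l : ℝ | ∃ x₁ x₂ y₁ y₂ : ℝ, x₁ < x₂ ∧ y₁ < y₂ ∧
    l = (y₂ - y₁) / (x₂ - x₁) ∧ RepresentsOnRect trSet w x₁ x₂ y₁ y₂} with hS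
  have hmem : ∀ b : ℝ, 0 < b → (1 - 0) / (b - 0) ∈ S := by
    intro b hb
    exact ⟨0, b, 0, 1, hb, one_pos, rfl, rep_rect c hc n b hb⟩
  have hlb : ∀ l ∈ S, (0:ℝ) ≤ l := by
    rintro l ⟨x₁, x₂, y₁, y₂, h1, h2, rfl, -⟩
    exact div_nonneg (by linarith) (by linarith)
  have hbdd : BddBelow S := ⟨0, hlb⟩
  have hne : S.Nonempty := ⟨_, hmem 1 one_pos⟩
  have hupper : ∀ δ : ℝ, 0 < δ → sInf S ≤ δ := by
    intro δ hδ
    have hb : (0:ℝ) < 1/δ + 1 := by positivity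
    calc sInf S ≤ (1 - 0) / (1/δ + 1 - 0) := csInf_le hbdd (hmem _ hb)
    _ ≤ δ := by
        rw [show (1:ℝ) - 0 = 1 by norm_num, sub_zero, div_le_iff₀ hb]
        have h2 : 1/δ * δ = 1 := by field_simp
        nlinarith
  have h0 : (0:ℝ) ≤ sInf S := le_csInf hne hlb
  have h1 : sInf S ≤ 0 := by
    by_contra h
    push_neg at h
    have := hupper (sInf S / 2) (by linarith)
    linarith
  show sInf S = 0
  linarith

/-- Theorem 1(1), exceptional cases: `λ_tr(a₁ⁿ) = 0` and `λ_tr(a₂ⁿ) = 0` for every `n ∈ ℤ`. -/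
theorem lambdaTR_pow_gen_eq_zero (n : ℤ) :
    lambdaTR (genOne ^ n) = 0 ∧ lambdaTR (genTwo ^ n) = 0 := by
  constructor
  · rw [genOne_eq, show genC (-1) (Or.inr rfl) = genC (-1) (Or.inr rfl) ^ (1:ℤ) from
      (zpow_one _).symm]
    rw [← zpow_mul, one_mul]
    rw [← cpath_eq_pow (-1) (Or.inr rfl) n (linW n) (linW_cont n) (linW_zero n) (linW_one n)]
    exact lambdaTR_cpath_zero (-1) (Or.inr rfl) n
  · rw [genTwo_eq, show genC 1 (Or.inl rfl) = genC 1 (Or.inl rfl) ^ (1:ℤ) from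
      (zpow_one _).symm]
    rw [← zpow_mul, one_mul]
    rw [← cpath_eq_pow 1 (Or.inl rfl) n (linW n) (linW_cont n) (linW_zero n) (linW_one n)]
    exact lambdaTR_cpath_zero 1 (Or.inl rfl) n
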